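/- Let 1 < p < q. For λ > 0 define μ(λ) := inf{(‖u'‖_p² + λ‖u‖_p²)/‖u‖_q² : u 2π-periodic, C¹, not identically zero}. Then the function λ ↦ μ(λ) is concave on (0,∞), satisfies μ(λ) ≤ λ for every λ > 0, and μ(λ) < λ whenever λ > λ₁*/(q − p). -/

import Mathlib

open MeasureTheory Real Set Metric intervalIntegral

/-- The L^r norm on the circle with the uniform probability measure dσ = dx/(2π),
for a 2π-periodic function `u : ℝ → ℝ`. -/
noncomputable def perNorm (r : ℝ) (u : ℝ → ℝ) : ℝ :=
  ((1 / (2 * π)) * ∫ x in (0:ℝ)..(2 * π), |u x| ^ r) ^ (1 / r)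

/-- `u` is 2π-periodic and C¹. -/
def PeriodicC1 (u : ℝ → ℝ) : Prop :=
  Function.Periodic u (2 * π) ∧ ContDiff ℝ 1 u

lemma two_pi_pos' : (0:ℝ) < 2 * π := by positivity

lemma perNorm_const_one (r : ℝ) (hr : 0 < r) : perNorm r (fun _ => (1:ℝ)) = 1 := by
  unfold perNorm
  have : ∀ x : ℝ, |(1:ℝ)| ^ r = 1 := by intro x; simp
  simp only [abs_one, Real.one_rpow, intervalIntegral.integral_const, smul_eq_mul, mul_one,
    sub_zero]
  rw [one_div_mul_cancel (ne_of_gt two_pi_pos'), Real.one_rpow]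

lemma perNorm_zero_fun (r : ℝ) (hr : 0 < r) : perNorm r (fun _ => (0:ℝ)) = 0 := by
  unfold perNorm
  simp only [abs_zero, Real.zero_rpow (ne_of_gt hr), intervalIntegral.integral_zero, mul_zero]
  rw [Real.zero_rpow]
  positivity

lemma const_one_mem (p q l : ℝ) (hp : 1 < p) (hq : p < q) :
    l ∈ { m : ℝ | ∃ u : ℝ → ℝ, PeriodicC1 u ∧ u ≠ 0 ∧
      m = ((perNorm p (deriv u)) ^ 2 + l * (perNorm p u) ^ 2) / (perNorm q u) ^ 2 } := by
  refine ⟨fun _ => 1, ⟨fun x => rfl, contDiff_const⟩, ?_, ?_⟩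
  · intro h
    have := congrFun h 0
    simp at this
  · have hd : deriv (fun _ : ℝ => (1:ℝ)) = fun _ => (0:ℝ) := by
      funext x; simp
    rw [hd, perNorm_zero_fun p (by linarith), perNorm_const_one p (by linarith),
      perNorm_const_one q (by linarith)]
    norm_num

lemma mem_nonneg (p q l : ℝ) (hl : 0 ≤ l) {m : ℝ}
    (hm : m ∈ { m : ℝ | ∃ u : ℝ → ℝ, PeriodicC1 u ∧ u ≠ 0 ∧
      m = ((perNorm p (deriv u)) ^ 2 + l * (perNorm p u) ^ 2) / (perNorm q u) ^ 2 }) :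
    0 ≤ m := by
  obtain ⟨u, -, -, rfl⟩ := hm
  have := sq_nonneg (perNorm p (deriv u))
  exact div_nonneg (add_nonneg (sq_nonneg _) (mul_nonneg hl (sq_nonneg _))) (sq_nonneg _)

section parts12
variable (p q : ℝ) (hp : 1 < p) (hq : p < q)

lemma muSet_bddBelow (l : ℝ) (hl : 0 ≤ l) :
    BddBelow { m : ℝ | ∃ u : ℝ → ℝ, PeriodicC1 u ∧ u ≠ 0 ∧
      m = ((perNorm p (deriv u)) ^ 2 + l * (perNorm p u) ^ 2) / (perNorm q u) ^ 2 } :=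
  ⟨0, fun _ hm => mem_nonneg p q l hl hm⟩

include hp hq in
lemma mu_le (l : ℝ) (hl : 0 < l) :
    sInf { m : ℝ | ∃ u : ℝ → ℝ, PeriodicC1 u ∧ u ≠ 0 ∧
      m = ((perNorm p (deriv u)) ^ 2 + l * (perNorm p u) ^ 2) / (perNorm q u) ^ 2 } ≤ l :=
  csInf_le (muSet_bddBelow p q l hl.le) (const_one_mem p q l hp hq)

include hp hq in
lemma mu_concave (mu : ℝ → ℝ)
    (hmu : ∀ l : ℝ, mu l = sInf { m : ℝ | ∃ u : ℝ → ℝ, PeriodicC1 u ∧ u ≠ 0 ∧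
      m = ((perNorm p (deriv u)) ^ 2 + l * (perNorm p u) ^ 2) / (perNorm q u) ^ 2 }) :
    ConcaveOn ℝ (Set.Ioi (0:ℝ)) mu := by
  refine ⟨convex_Ioi 0, ?_⟩
  intro x hx y hy a b ha hb hab
  simp only [smul_eq_mul]
  rw [hmu (a * x + b * y)]
  have hxy : 0 < a * x + b * y := by
    rcases eq_or_lt_of_le ha with h | h
    · rw [← h] at hab ⊢; simp only [zero_mul, zero_add] at *
      have : b = 1 := by linarith
      rw [this]; simpa using hy
    · rcases eq_or_lt_of_le hb with h' | h'
      · rw [← h'] at hab ⊢; simp only [zero_mul, add_zero] at *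
        have : a = 1 := by linarith
        rw [this]; simpa using hx
      · have := mul_pos h (mem_Ioi.mp hx)
        have := mul_pos h' (mem_Ioi.mp hy)
        linarith
  apply le_csInf ⟨_, const_one_mem p q (a*x+b*y) hp hq⟩
  rintro m ⟨u, hu1, hu2, rfl⟩
  set A := perNorm p (deriv u) ^ 2
  set B := perNorm p u ^ 2
  set C := perNorm q u ^ 2
  have h1 : mu x ≤ (A + x * B) / C := by
    rw [hmu x]
    exact csInf_le (muSet_bddBelow p q x (le_of_lt (mem_Ioi.mp hx))) ⟨u, hu1, hu2, rfl⟩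
  have h2 : mu y ≤ (A + y * B) / C := by
    rw [hmu y]
    exact csInf_le (muSet_bddBelow p q y (le_of_lt (mem_Ioi.mp hy))) ⟨u, hu1, hu2, rfl⟩
  calc a * mu x + b * mu y ≤ a * ((A + x * B) / C) + b * ((A + y * B) / C) :=
        add_le_add (mul_le_mul_of_nonneg_left h1 ha) (mul_le_mul_of_nonneg_left h2 hb)
    _ = (a * (A + x * B) + b * (A + y * B)) / C := by rw [← mul_div_assoc, ← mul_div_assoc, ← add_div]
    _ = (A + (a * x + b * y) * B) / C := by
        congr 1
        linear_combination A * hab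

end parts12

section part3

lemma abs_rpow_two' (a : ℝ) : |a| ^ (2:ℝ) = a ^ 2 := by
  rw [show (2:ℝ) = ((2:ℕ):ℝ) by norm_num, Real.rpow_natCast, sq_abs]

lemma integral_sq_pos (v : ℝ → ℝ) (hper : Function.Periodic v (2*π))
    (hc : Continuous v) (hv0 : v ≠ 0) :
    0 < ∫ x in (0:ℝ)..(2*π), (v x) ^ 2 := by
  obtain ⟨y, hy⟩ : ∃ y, v y ≠ 0 := by
    by_contra h
    push_neg at h
    exact hv0 (funext fun x => h x)
  have hfper : Function.Periodic (fun x => (v x)^2) (2*π) := fun x => by simp [hper x]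
  have hint : ∀ a b : ℝ, IntervalIntegrable (fun x => (v x)^2) volume a b :=
    fun a b => ((hc.pow 2).intervalIntegrable a b)
  have hshift : (∫ x in (0:ℝ)..(2*π), (v x)^2) = ∫ x in (y - π)..(y - π + 2*π), (v x)^2 := by
    have := hfper.intervalIntegral_add_eq (y - π) 0
    simpa using this.symm
  rw [hshift]
  have hcont : ContinuousAt (fun x => (v x)^2) y := (hc.pow 2).continuousAt
  have hypos : 0 < (v y)^2 := by positivity
  obtain ⟨δ, hδpos, hδ⟩ := Metric.continuousAt_iff.mp hcont ((v y)^2) hypos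
  set d := min δ π with hd
  have hdpos : 0 < d := lt_min hδpos pi_pos
  have hdπ : d ≤ π := min_le_right _ _
  have hposmid : 0 < ∫ x in (y - d)..(y + d), (v x)^2 := by
    apply intervalIntegral_pos_of_pos_on (hint _ _) _ (by linarith)
    intro x hx
    have hdist : dist x y < δ := by
      rw [Real.dist_eq, abs_sub_lt_iff]
      obtain ⟨h1, h2⟩ := hx
      have := min_le_left δ π
      constructor <;> linarith
    have := hδ hdist
    rw [Real.dist_eq, abs_sub_lt_iff] at this
    nlinarith [sq_nonneg (v x)]
  have e1 : (∫ x in (y - π)..(y - d), (v x)^2) + ∫ x in (y - d)..(y - π + 2*π), (v x)^2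
      = ∫ x in (y - π)..(y - π + 2*π), (v x)^2 :=
    intervalIntegral.integral_add_adjacent_intervals (hint _ _) (hint _ _)
  have e2 : (∫ x in (y - d)..(y + d), (v x)^2) + ∫ x in (y + d)..(y - π + 2*π), (v x)^2
      = ∫ x in (y - d)..(y - π + 2*π), (v x)^2 :=
    intervalIntegral.integral_add_adjacent_intervals (hint _ _) (hint _ _)
  have n1 : 0 ≤ ∫ x in (y - π)..(y - d), (v x)^2 :=
    intervalIntegral.integral_nonneg (by linarith) (fun x _ => sq_nonneg _)
  have n2 : 0 ≤ ∫ x in (y + d)..(y - π + 2*π), (v x)^2 :=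
    intervalIntegral.integral_nonneg (by linarith) (fun x _ => sq_nonneg _)
  linarith

lemma perNorm_sq (r : ℝ) (hr : 0 < r) (u : ℝ → ℝ) :
    perNorm r u ^ 2 = ((1/(2*π)) * ∫ x in (0:ℝ)..(2*π), |u x| ^ r) ^ (2/r) := by
  set X := (1/(2*π)) * ∫ x in (0:ℝ)..(2*π), |u x| ^ r with hX
  have hX0 : 0 ≤ X :=
    mul_nonneg (by positivity)
      (intervalIntegral.integral_nonneg (le_of_lt two_pi_pos')
        (fun x _ => Real.rpow_nonneg (abs_nonneg _) r))
  rw [perNorm, ← hX, ← Real.rpow_natCast (X ^ (1/r)) 2, ← Real.rpow_mul hX0]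
  congr 1
  push_cast
  ring

lemma perNorm_two_sq (v : ℝ → ℝ) :
    perNorm 2 v ^ 2 = (1/(2*π)) * ∫ x in (0:ℝ)..(2*π), (v x)^2 := by
  rw [perNorm_sq 2 (by norm_num) v]
  rw [intervalIntegral.integral_congr (fun x _ => abs_rpow_two' (v x))]
  norm_num

lemma starSet_nonempty (p : ℝ) : Set.Nonempty { l : ℝ | ∃ v : ℝ → ℝ, PeriodicC1 v ∧ v ≠ 0 ∧
    (∫ x in (0:ℝ)..(2 * π), v x) = 0 ∧
    l = (perNorm p (deriv v)) ^ 2 / (perNorm 2 v) ^ 2 } := by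
  refine ⟨_, Real.sin, ⟨Real.sin_periodic, Real.contDiff_sin⟩, ?_, ?_, rfl⟩
  · intro h
    have := congrFun h (π/2)
    simp at this
  · rw [integral_sin]
    simp

end part3

section machinery

variable {v : ℝ → ℝ} {M : ℝ}

lemma base_bounds (hM0 : 0 < M) (hM : ∀ x, |v x| ≤ M) {e : ℝ}
    (he : |e| < 1/(2*M)) (x : ℝ) : 1/2 ≤ 1 + e * v x ∧ 1 + e * v x ≤ 2 := by
  have h1 : |e * v x| ≤ |e| * M := by
    rw [abs_mul]; exact mul_le_mul_of_nonneg_left (hM x) (abs_nonneg e)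
  have h2 : |e| * M < 1/2 := by
    calc |e| * M < (1/(2*M)) * M := mul_lt_mul_of_pos_right he hM0
      _ = 1/2 := by field_simp
  have h3 := abs_lt.mp (lt_of_le_of_lt h1 h2)
  constructor <;> [linarith [h3.1]; linarith [h3.2]]

lemma rpow_le_two_rpow {x s : ℝ} (h1 : 1/2 ≤ x) (h2 : x ≤ 2) : x ^ s ≤ 2 ^ |s| := by
  rcases le_or_gt 0 s with hs | hs
  · rw [abs_of_nonneg hs]; exact Real.rpow_le_rpow (by linarith) h2 hs
  · rw [abs_of_neg hs]
    calc x ^ s ≤ (1/2 : ℝ) ^ s := Real.rpow_le_rpow_of_nonpos (by norm_num) h1 hs.le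
      _ = 2 ^ (-s) := by
          rw [one_div, Real.inv_rpow (by norm_num), ← Real.rpow_neg (by norm_num)]

lemma ball_subset_abs (hM0 : 0 < M) {ε : ℝ} (hε : |ε| < 1/(2*M)) :
    ∀ e ∈ Metric.ball ε (1/(2*M) - |ε|), |e| < 1/(2*M) := by
  intro e he'
  rw [Metric.mem_ball, Real.dist_eq] at he'
  calc |e| = |(e - ε) + ε| := by ring_nf
    _ ≤ |e - ε| + |ε| := abs_add_le _ _
    _ < 1/(2*M) := by linarith

lemma hasDerivAt_g (hc : Continuous v) (hM0 : 0 < M) (hM : ∀ x, |v x| ≤ M)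
    (r : ℝ) (hr : 0 < r) {ε : ℝ} (hε : |ε| < 1/(2*M)) :
    HasDerivAt (fun e => ∫ x in (0:ℝ)..(2*π), (1 + e * v x) ^ r)
      (∫ x in (0:ℝ)..(2*π), v x * r * (1 + ε * v x) ^ (r - 1)) ε := by
  have hδ : 0 < 1/(2*M) - |ε| := by linarith
  have hball := ball_subset_abs hM0 hε
  have hbase : Continuous (fun x : ℝ => 1 + ε * v x) :=
    continuous_const.add (continuous_const.mul hc)
  refine (intervalIntegral.hasDerivAt_integral_of_dominated_loc_of_deriv_le
    (F' := fun e x => v x * r * (1 + e * v x) ^ (r - 1))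
    (bound := fun _ => M * r * 2 ^ |r - 1|) (Metric.ball_mem_nhds ε hδ) ?_ ?_ ?_ ?_ ?_ ?_).2
  · filter_upwards with e
    exact ((continuous_const.add (continuous_const.mul hc)).rpow_const
      (fun x => Or.inr hr.le)).aestronglyMeasurable
  · exact ((hbase.rpow_const (fun x => Or.inr hr.le)).intervalIntegrable _ _)
  · refine (((hc.mul continuous_const).mul (hbase.rpow_const (fun x => ?_)))).aestronglyMeasurable
    exact Or.inl (by linarith [(base_bounds hM0 hM hε x).1])
  · refine Filter.Eventually.of_forall (fun t _ e he => ?_)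
    have hb := base_bounds hM0 hM (hball e he) t
    have h3 : (1 + e * v t) ^ (r - 1) ≤ 2 ^ |r - 1| := rpow_le_two_rpow hb.1 hb.2
    have h4 : (0:ℝ) ≤ (1 + e * v t) ^ (r - 1) := Real.rpow_nonneg (by linarith [hb.1]) _
    rw [Real.norm_eq_abs, abs_mul, abs_mul, abs_of_pos hr, abs_of_nonneg h4]
    have h5 : |v t| * r ≤ M * r := mul_le_mul_of_nonneg_right (hM t) hr.le
    exact mul_le_mul h5 h3 h4 (by positivity)
  · exact intervalIntegrable_const
  · refine Filter.Eventually.of_forall (fun t _ e he => ?_)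
    have hb := base_bounds hM0 hM (hball e he) t
    have h0 : HasDerivAt (fun e : ℝ => 1 + e * v t) (v t) e := by
      simpa using ((hasDerivAt_id e).mul_const (v t)).const_add 1
    exact h0.rpow_const (Or.inl (by linarith [hb.1]))

lemma hasDerivAt_g1 (hc : Continuous v) (hM0 : 0 < M) (hM : ∀ x, |v x| ≤ M)
    (r : ℝ) (hr : 0 < r) {ε : ℝ} (hε : |ε| < 1/(2*M)) :
    HasDerivAt (fun e => ∫ x in (0:ℝ)..(2*π), v x * r * (1 + e * v x) ^ (r - 1))
      (∫ x in (0:ℝ)..(2*π), v x * r * (v x * (r - 1) * (1 + ε * v x) ^ (r - 2))) ε := by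
  have hδ : 0 < 1/(2*M) - |ε| := by linarith
  have hball := ball_subset_abs hM0 hε
  have hcb : ∀ e : ℝ, |e| < 1/(2*M) → ∀ s : ℝ, Continuous (fun x : ℝ => (1 + e * v x) ^ s) := by
    intro e he s
    exact (continuous_const.add (continuous_const.mul hc)).rpow_const
      (fun x => Or.inl (show (1:ℝ) + e * v x ≠ 0 by linarith [(base_bounds hM0 hM he x).1]))
  refine (intervalIntegral.hasDerivAt_integral_of_dominated_loc_of_deriv_le
    (F' := fun e x => v x * r * (v x * (r - 1) * (1 + e * v x) ^ (r - 2)))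
    (bound := fun _ => M * r * (M * (|r - 1| + 1) * 2 ^ |r - 2|)) (Metric.ball_mem_nhds ε hδ) ?_ ?_ ?_ ?_ ?_ ?_).2
  · have : {e : ℝ | |e| < 1/(2*M)} ∈ nhds ε := by
      have : Metric.ball (0:ℝ) (1/(2*M)) = {e : ℝ | |e| < 1/(2*M)} := by
        ext e; simp [Real.dist_eq]
      rw [← this]
      exact Metric.isOpen_ball.mem_nhds (by simpa [Real.dist_eq] using hε)
    filter_upwards [this] with e he
    exact ((hc.mul continuous_const).mul (hcb e he _)).aestronglyMeasurable
  · exact (((hc.mul continuous_const).mul (hcb ε hε _)).intervalIntegrable _ _)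
  · exact ((hc.mul continuous_const).mul ((hc.mul continuous_const).mul
      (hcb ε hε _))).aestronglyMeasurable
  · refine Filter.Eventually.of_forall (fun t _ e he => ?_)
    have hb := base_bounds hM0 hM (hball e he) t
    have h3 : (1 + e * v t) ^ (r - 2) ≤ 2 ^ |r - 2| := rpow_le_two_rpow hb.1 hb.2
    have h4 : (0:ℝ) ≤ (1 + e * v t) ^ (r - 2) := Real.rpow_nonneg (by linarith [hb.1]) _
    rw [Real.norm_eq_abs, abs_mul, abs_mul, abs_mul, abs_of_pos hr, abs_of_nonneg h4]
    have h5 : |v t| * r ≤ M * r := mul_le_mul_of_nonneg_right (hM t) hr.le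
    refine mul_le_mul h5 ?_ (by positivity) (by positivity)
    have h6 : |v t * (r - 1)| ≤ M * (|r - 1| + 1) := by
      rw [abs_mul]
      have := hM t
      have := abs_nonneg (r - 1)
      nlinarith
    exact mul_le_mul h6 h3 h4 (by positivity)
  · exact intervalIntegrable_const
  · refine Filter.Eventually.of_forall (fun t _ e he => ?_)
    have hb := base_bounds hM0 hM (hball e he) t
    have h0 : HasDerivAt (fun e : ℝ => 1 + e * v t) (v t) e := by
      simpa using ((hasDerivAt_id e).mul_const (v t)).const_add 1
    rw [show (r:ℝ) - 2 = r - 1 - 1 by ring]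
    exact (h0.rpow_const (Or.inl (by linarith [hb.1]))).const_mul (v t * r)

end machinery

section monster

lemma exists_good_u (p q l : ℝ) (hp : 1 < p) (hq : p < q) (hl : 0 < l)
    (v : ℝ → ℝ) (hper : Function.Periodic v (2*π)) (hC1 : ContDiff ℝ 1 v)
    (hmean : (∫ x in (0:ℝ)..(2*π), v x) = 0)
    (hrat : perNorm p (deriv v) ^ 2
      < l * (q - p) * ((1/(2*π)) * ∫ x in (0:ℝ)..(2*π), (v x)^2)) :
    ∃ u : ℝ → ℝ, PeriodicC1 u ∧ u ≠ 0 ∧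
      (perNorm p (deriv u) ^ 2 + l * perNorm p u ^ 2) / perNorm q u ^ 2 < l := by
  have hc : Continuous v := hC1.continuous
  -- global bound M
  obtain ⟨M0, hM0'⟩ : ∃ M0, ∀ x ∈ Set.Icc (0:ℝ) (2*π), ‖v x‖ ≤ M0 :=
    (isCompact_Icc).exists_bound_of_continuousOn hc.continuousOn
  set M : ℝ := max M0 1 with hMdef
  have hM0 : 0 < M := lt_of_lt_of_le one_pos (le_max_right _ _)
  have hM : ∀ x, |v x| ≤ M := by
    intro x
    obtain ⟨y, hy, hxy⟩ := hper.exists_mem_Ico₀ two_pi_pos' x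
    rw [hxy]
    calc |v y| ≤ M0 := hM0' y (Set.Ico_subset_Icc_self hy)
      _ ≤ M := le_max_left _ _
  set ε₀ : ℝ := 1/(2*M) with hε₀def
  have hε₀pos : 0 < ε₀ := by positivity
  set c : ℝ := 1/(2*π) with hcdef
  have hcpos : 0 < c := by positivity
  have hc2π : c * (2*π) = 1 := by
    rw [hcdef]; field_simp
  set D : ℝ := perNorm p (deriv v) ^ 2 with hDdef
  set N : ℝ := c * ∫ x in (0:ℝ)..(2*π), (v x)^2 with hNdef
  set g : ℝ → ℝ → ℝ := fun r e => ∫ x in (0:ℝ)..(2*π), (1 + e * v x) ^ r with hgdef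
  set g1 : ℝ → ℝ → ℝ := fun r e => ∫ x in (0:ℝ)..(2*π), v x * r * (1 + e * v x) ^ (r - 1)
    with hg1def
  have hg0 : ∀ r : ℝ, g r 0 = 2*π := by
    intro r
    rw [hgdef]
    simp only [zero_mul, add_zero, Real.one_rpow]
    simp
  have hg10 : ∀ r : ℝ, g1 r 0 = 0 := by
    intro r
    rw [hg1def]
    simp only [zero_mul, add_zero, Real.one_rpow, mul_one]
    rw [show (fun x => v x * r) = (fun x => r * v x) by funext x; ring]
    rw [intervalIntegral.integral_const_mul, hmean, mul_zero]
  -- positivity of g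
  have hgpos : ∀ r : ℝ, 0 < r → ∀ e : ℝ, |e| < ε₀ → 0 < g r e := by
    intro r hr e he
    have h1 : (0:ℝ) < 2*π * (1/2 : ℝ) ^ r := by positivity
    have h2 : (2*π) * (1/2:ℝ)^r = ∫ _x in (0:ℝ)..(2*π), (1/2:ℝ)^r := by simp
    have h3 : (∫ _x in (0:ℝ)..(2*π), (1/2:ℝ)^r) ≤ g r e := by
      rw [hgdef]
      apply intervalIntegral.integral_mono_on two_pi_pos'.le intervalIntegrable_const
      · exact ((continuous_const.add (continuous_const.mul hc)).rpow_const
          (fun x => Or.inr hr.le)).intervalIntegrable _ _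
      · intro x _
        exact Real.rpow_le_rpow (by norm_num) (base_bounds hM0 hM he x).1 hr.le
    linarith
  -- derivative facts
  have F1 : ∀ r : ℝ, 0 < r → ∀ e : ℝ, |e| < ε₀ → HasDerivAt (g r) (g1 r e) e :=
    fun r hr e he => hasDerivAt_g hc hM0 hM r hr he
  have F2 : ∀ r : ℝ, 0 < r → HasDerivAt (g1 r)
      (∫ x in (0:ℝ)..(2*π), v x * r * (v x * (r - 1) * (1 + 0 * v x) ^ (r - 2))) 0 :=
    fun r hr => hasDerivAt_g1 hc hM0 hM r hr (by rw [abs_zero]; positivity)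
  have hg2 : ∀ r : ℝ,
      (∫ x in (0:ℝ)..(2*π), v x * r * (v x * (r - 1) * (1 + 0 * v x) ^ (r - 2)))
        = r * (r-1) * ∫ x in (0:ℝ)..(2*π), (v x)^2 := by
    intro r
    rw [show (fun x => v x * r * (v x * (r - 1) * (1 + 0 * v x) ^ (r - 2)))
        = (fun x => r * (r-1) * (v x)^2) by
      funext x; simp only [zero_mul, add_zero, Real.one_rpow, mul_one]; ring]
    rw [intervalIntegral.integral_const_mul]
  -- b2
  set b2 : ℝ → ℝ → ℝ := fun r e => (c * g r e) ^ (2/r) with hb2def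
  have hb2deriv : ∀ r : ℝ, 0 < r → ∀ e : ℝ, |e| < ε₀ →
      HasDerivAt (b2 r) ((c * g1 r e) * (2/r) * (c * g r e) ^ (2/r - 1)) e := by
    intro r hr e he
    exact ((F1 r hr e he).const_mul c).rpow_const
      (Or.inl (ne_of_gt (mul_pos hcpos (hgpos r hr e he))))
  have hb20 : ∀ r : ℝ, b2 r 0 = 1 := by
    intro r
    rw [hb2def]
    simp only [hg0, hc2π]
    exact Real.one_rpow _
  -- the function h and its derivative h1
  set hfun : ℝ → ℝ := fun e => e^2 * D + l * b2 p e - l * b2 q e with hfun_def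
  set h1 : ℝ → ℝ → ℝ := fun r e => (c * g1 r e) * (2/r) * (c * g r e) ^ (2/r - 1) with h1def
  set hder : ℝ → ℝ := fun e => 2*e*D + l * h1 p e - l * h1 q e with hder_def
  have hhd : ∀ e : ℝ, |e| < ε₀ → HasDerivAt hfun (hder e) e := by
    intro e he
    have d1 : HasDerivAt (fun e : ℝ => e^2 * D) (2*e*D) e := by
      have := (hasDerivAt_pow 2 e).mul_const D
      simpa using this
    exact (d1.add ((hb2deriv p (by linarith) e he).const_mul l)).sub
      ((hb2deriv q (by linarith) e he).const_mul l)
  have hder0 : hder 0 = 0 := by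
    rw [hder_def]
    simp only [h1def, hg10, mul_zero, zero_mul, mul_zero, sub_zero]
    ring
  -- second derivative of hfun at 0 : derivative of hder at 0
  have hKd : ∀ r : ℝ, 0 < r → HasDerivAt (h1 r) ((c * (r * (r-1) * ∫ x in (0:ℝ)..(2*π), (v x)^2)) * (2/r) * 1
        + ((c * g1 r 0) * (2/r)) * ((c * g1 r 0) * (2/r - 1) * (c * g r 0) ^ (2/r - 1 - 1))) 0 := by
    intro r hr
    have h0ball : |(0:ℝ)| < ε₀ := by simpa using hε₀pos
    have du : HasDerivAt (fun e => (c * g1 r e) * (2/r))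
        ((c * (r * (r-1) * ∫ x in (0:ℝ)..(2*π), (v x)^2)) * (2/r)) 0 := by
      have := ((F2 r hr).const_mul c).mul_const (2/r)
      rwa [hg2 r] at this
    have dw : HasDerivAt (fun e => (c * g r e) ^ (2/r - 1))
        ((c * g1 r 0) * (2/r - 1) * (c * g r 0) ^ (2/r - 1 - 1)) 0 := by
      exact ((F1 r hr 0 h0ball).const_mul c).rpow_const
        (Or.inl (ne_of_gt (mul_pos hcpos (hgpos r hr 0 h0ball))))
    have := du.mul dw
    rw [h1def]
    refine this.congr_deriv ?_
    simp only [hg0, hg10, hc2π, Real.one_rpow, mul_zero, zero_mul]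
  have hp0 : p ≠ 0 := by linarith
  have hq0 : q ≠ 0 := by linarith
  set I : ℝ := ∫ x in (0:ℝ)..(2*π), (v x)^2 with hIdef
  have hK : HasDerivAt hder (2*D + 2*l*(p-1)*N - 2*l*(q-1)*N) 0 := by
    have d1 : HasDerivAt (fun e : ℝ => 2*e*D) (2*D) 0 := by
      simpa using ((hasDerivAt_id (0:ℝ)).const_mul 2).mul_const D
    have dp := (hKd p (by linarith)).const_mul l
    have dq := (hKd q (by linarith)).const_mul l
    have hcomb := (d1.add dp).sub dq
    rw [hder_def]
    refine hcomb.congr_deriv ?_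
    simp only [hg10, mul_zero, zero_mul, add_zero, mul_one]
    rw [hNdef]
    field_simp
  have hKneg : 2*D + 2*l*(p-1)*N - 2*l*(q-1)*N < 0 := by nlinarith [hrat]
  -- find small positive point where hfun < 0
  have hslope := hasDerivAt_iff_tendsto_slope.mp hK
  have hev1 : ∀ᶠ e in nhdsWithin 0 (Set.Ioi (0:ℝ)), slope hder 0 e < 0 := by
    refine Filter.Tendsto.eventually_lt_const hKneg (hslope.mono_left (nhdsWithin_mono 0 ?_))
    intro x hx
    exact Set.mem_compl_singleton_iff.mpr (ne_of_gt hx)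
  have hev2 : ∀ᶠ e in nhdsWithin 0 (Set.Ioi (0:ℝ)), e ∈ Set.Ioo (0:ℝ) ε₀ :=
    Ioo_mem_nhdsGT_of_mem ⟨le_refl 0, hε₀pos⟩
  have hev : ∀ᶠ e in nhdsWithin 0 (Set.Ioi (0:ℝ)), hder e < 0 ∧ e ∈ Set.Ioo (0:ℝ) ε₀ := by
    filter_upwards [hev1, hev2] with e h1 h2
    refine ⟨?_, h2⟩
    rw [slope_def_field, hder0, sub_zero, sub_zero] at h1
    have := (div_lt_iff₀ h2.1).mp h1
    linarith
  obtain ⟨δ, hδmem, hsub⟩ := mem_nhdsGT_iff_exists_Ioo_subset.mp hev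
  have hδpos : 0 < δ := hδmem
  set d : ℝ := min δ ε₀ with hddef
  have hdpos : 0 < d := lt_min hδpos hε₀pos
  have hmemneg : ∀ x ∈ Set.Ioo (0:ℝ) d, hder x < 0 := fun x hx =>
    (hsub ⟨hx.1, lt_of_lt_of_le hx.2 (min_le_left _ _)⟩).1
  have hball' : ∀ x ∈ Set.Icc (0:ℝ) (d/2), |x| < ε₀ := by
    intro x hx
    rw [abs_of_nonneg hx.1]
    have h1 := min_le_right δ ε₀
    have := hx.2
    linarith
  have hanti : StrictAntiOn hfun (Set.Icc 0 (d/2)) := by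
    apply strictAntiOn_of_deriv_neg (convex_Icc _ _)
    · intro x hx
      exact (hhd x (hball' x hx)).continuousAt.continuousWithinAt
    · intro x hx
      rw [interior_Icc] at hx
      rw [(hhd x (hball' x ⟨hx.1.le, hx.2.le⟩)).deriv]
      exact hmemneg x ⟨hx.1, by linarith [hx.2]⟩
  have hfun0 : hfun 0 = 0 := by
    show (0:ℝ)^2 * D + l * b2 p 0 - l * b2 q 0 = 0
    rw [hb20, hb20]
    ring
  have hneg : hfun (d/2) < 0 := by
    have h0mem : (0:ℝ) ∈ Set.Icc (0:ℝ) (d/2) := ⟨le_refl _, by linarith⟩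
    have hdmem : d/2 ∈ Set.Icc (0:ℝ) (d/2) := ⟨by linarith, le_refl _⟩
    have hlt := hanti h0mem hdmem (by linarith)
    rw [hfun0] at hlt
    exact hlt
  set ee : ℝ := d/2 with heedef
  have heepos : 0 < ee := by positivity
  have heeball : |ee| < ε₀ := hball' ee ⟨heepos.le, le_refl _⟩
  refine ⟨fun x => 1 + ee * v x,
    ⟨fun x => by simp [hper x], contDiff_const.add (contDiff_const.mul hC1)⟩, ?_, ?_⟩
  · intro hzero
    have h0 := congrFun hzero 0
    have hb := (base_bounds hM0 hM heeball 0).1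
    simp only [Pi.zero_apply] at h0
    rw [h0] at hb
    norm_num at hb
  · have hderiv_u : deriv (fun x => 1 + ee * v x) = fun x => ee * deriv v x := by
      funext x
      have hdv : HasDerivAt v (deriv v x) x := ((hC1.differentiable one_ne_zero) x).hasDerivAt
      exact ((hdv.const_mul ee).const_add 1).deriv
    have hJnn : (0:ℝ) ≤ (1/(2*π)) * ∫ x in (0:ℝ)..(2*π), |deriv v x| ^ p :=
      mul_nonneg (by positivity) (intervalIntegral.integral_nonneg two_pi_pos'.le
        (fun x _ => Real.rpow_nonneg (abs_nonneg _) p))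
    have hA : perNorm p (deriv (fun x => 1 + ee * v x)) ^ 2 = ee^2 * D := by
      rw [hderiv_u, hDdef]
      have h1 : perNorm p (fun x => ee * deriv v x) = ee * perNorm p (deriv v) := by
        unfold perNorm
        rw [intervalIntegral.integral_congr
          (g := fun x => ee^p * |deriv v x|^p) (fun x _ => by
            rw [abs_mul, abs_of_pos heepos, Real.mul_rpow heepos.le (abs_nonneg _)])]
        rw [intervalIntegral.integral_const_mul]
        rw [show (1/(2*π)) * (ee^p * ∫ x in (0:ℝ)..(2*π), |deriv v x|^p)
            = ee^p * ((1/(2*π)) * ∫ x in (0:ℝ)..(2*π), |deriv v x|^p) by ring]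
        rw [Real.mul_rpow (Real.rpow_nonneg heepos.le p) hJnn]
        congr 1
        rw [← Real.rpow_mul heepos.le, mul_one_div_cancel hp0, Real.rpow_one]
      rw [h1, mul_pow]
    have hBp : perNorm p (fun x => 1 + ee * v x) ^ 2 = b2 p ee := by
      rw [perNorm_sq p (by linarith)]
      simp only [hb2def, hgdef, hcdef]
      congr 2
      apply intervalIntegral.integral_congr
      intro x _
      show |1 + ee * v x| ^ p = (1 + ee * v x) ^ p
      rw [abs_of_pos (by linarith [(base_bounds hM0 hM heeball x).1])]
    have hBq : perNorm q (fun x => 1 + ee * v x) ^ 2 = b2 q ee := by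
      rw [perNorm_sq q (by linarith)]
      simp only [hb2def, hgdef, hcdef]
      congr 2
      apply intervalIntegral.integral_congr
      intro x _
      show |1 + ee * v x| ^ q = (1 + ee * v x) ^ q
      rw [abs_of_pos (by linarith [(base_bounds hM0 hM heeball x).1])]
    have hCpos : 0 < b2 q ee := by
      simp only [hb2def]
      exact Real.rpow_pos_of_pos (mul_pos hcpos (hgpos q (by linarith) ee heeball)) _
    rw [hA, hBp, hBq, div_lt_iff₀ hCpos]
    have hneg' : ee^2 * D + l * b2 p ee - l * b2 q ee < 0 := hneg
    linarith

end monster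

/-- λ₁ = inf ‖v'‖_p²/‖v‖_p² over 2π-periodic C¹ functions v ≢ 0 with ∫₀^{2π} v dx = 0. -/
noncomputable def lambdaOne (p : ℝ) : ℝ :=
  sInf { l : ℝ | ∃ v : ℝ → ℝ, PeriodicC1 v ∧ v ≠ 0 ∧
    (∫ x in (0:ℝ)..(2 * π), v x) = 0 ∧
    l = (perNorm p (deriv v)) ^ 2 / (perNorm p v) ^ 2 }

/-- λ₁* = inf ‖v'‖_p²/‖v‖_2² over 2π-periodic C¹ functions v ≢ 0 with ∫₀^{2π} v dx = 0. -/
noncomputable def lambdaOneStar (p : ℝ) : ℝ :=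
  sInf { l : ℝ | ∃ v : ℝ → ℝ, PeriodicC1 v ∧ v ≠ 0 ∧
    (∫ x in (0:ℝ)..(2 * π), v x) = 0 ∧
    l = (perNorm p (deriv v)) ^ 2 / (perNorm 2 v) ^ 2 }

/-- The p-Laplacian L_p u = (|u'|^{p-2} u')'. -/
noncomputable def pLap (p : ℝ) (u : ℝ → ℝ) : ℝ → ℝ :=
  deriv (fun x => |deriv u x| ^ (p - 2) * deriv u x)

/-- properties of λ ↦ μ(λ) (Proposition 2.1). -/
theorem mu_concave_increasing (p q : ℝ) (hp : 1 < p) (hq : p < q)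
    (mu : ℝ → ℝ)
    (hmu : ∀ l : ℝ, mu l = sInf { m : ℝ | ∃ u : ℝ → ℝ, PeriodicC1 u ∧ u ≠ 0 ∧
      m = ((perNorm p (deriv u)) ^ 2 + l * (perNorm p u) ^ 2) / (perNorm q u) ^ 2 }) :
    ConcaveOn ℝ (Set.Ioi (0:ℝ)) mu ∧
    (∀ l : ℝ, 0 < l → mu l ≤ l) ∧
    (∀ l : ℝ, lambdaOneStar p / (q - p) < l → mu l < l) := by
  refine ⟨mu_concave p q hp hq mu hmu, fun l hl => by rw [hmu]; exact mu_le p q hp hq l hl, ?_⟩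
  intro l hl
  have hqp : 0 < q - p := by linarith
  have hstar_nonneg : 0 ≤ lambdaOneStar p := by
    apply Real.sInf_nonneg
    rintro x ⟨v, -, -, -, rfl⟩
    exact div_nonneg (sq_nonneg _) (sq_nonneg _)
  have hlpos : 0 < l := lt_of_le_of_lt (div_nonneg hstar_nonneg hqp.le) hl
  have hlt : lambdaOneStar p < l * (q - p) := (div_lt_iff₀ hqp).mp hl
  obtain ⟨s, hs, hslt⟩ := exists_lt_of_csInf_lt (starSet_nonempty p) hlt
  obtain ⟨v, ⟨hper, hC1⟩, hv0, hmean, rfl⟩ := hs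
  have hNpos : 0 < perNorm 2 v ^ 2 := by
    rw [perNorm_two_sq]
    exact mul_pos (by positivity) (integral_sq_pos v hper hC1.continuous hv0)
  have hrat : perNorm p (deriv v) ^ 2 < l * (q - p) * (perNorm 2 v ^ 2) :=
    (div_lt_iff₀ hNpos).mp hslt
  rw [perNorm_two_sq] at hrat
  obtain ⟨u, hu1, hu2, hu3⟩ := exists_good_u p q l hp hq hlpos v hper hC1 hmean hrat
  rw [hmu]
  calc sInf _ ≤ _ := csInf_le (muSet_bddBelow p q l hlpos.le) ⟨u, hu1, hu2, rfl⟩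
    _ < l := hu3
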